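/- Let A ∈ ℝ^{n×m}, B ∈ ℝ^{k×n}, and let C ∈ ℝ^{n×n} be symmetric. The matrix inequality AXB + (AXB)ᵀ + C ≺ 0 (the left-hand side is negative definite) has a solution X ∈ ℝ^{m×k} if and only if there exist reals μ₁, μ₂ such that μ₁·AAᵀ − C is positive definite and μ₂·BᵀB − C is positive definite. -/

import Mathlib

open Matrix BigOperators

section Helpers

variable {nn aa : Type*} [Fintype nn] [Fintype aa]

private lemma dot_self_nonneg'' (x : aa → ℝ) : 0 ≤ x ⬝ᵥ x :=
  Finset.sum_nonneg fun i _ => mul_self_nonneg (x i)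

private lemma dot_self_pos'' {x : aa → ℝ} (hx : x ≠ 0) : 0 < x ⬝ᵥ x := by
  obtain ⟨i, hi⟩ := Function.ne_iff.mp hx
  exact Finset.sum_pos' (fun j _ => mul_self_nonneg (x j))
    ⟨i, Finset.mem_univ i, mul_self_pos.mpr hi⟩

private lemma quad_gram (U : Matrix aa nn ℝ) (x : nn → ℝ) :
    x ⬝ᵥ (Uᵀ * U) *ᵥ x = (U *ᵥ x) ⬝ᵥ (U *ᵥ x) := by
  rw [← Matrix.mulVec_mulVec, Matrix.dotProduct_mulVec, Matrix.vecMul_transpose]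

private lemma quad_pair (U V : Matrix aa nn ℝ) (x : nn → ℝ) :
    x ⬝ᵥ (Uᵀ * V) *ᵥ x = (U *ᵥ x) ⬝ᵥ (V *ᵥ x) := by
  rw [← Matrix.mulVec_mulVec, Matrix.dotProduct_mulVec, Matrix.vecMul_transpose]

private lemma quad_congr (M : Matrix aa aa ℝ) (N : Matrix aa nn ℝ) (x : nn → ℝ) :
    x ⬝ᵥ (Nᵀ * M * N) *ᵥ x = (N *ᵥ x) ⬝ᵥ (M *ᵥ (N *ᵥ x)) := by
  rw [Matrix.mul_assoc, ← Matrix.mulVec_mulVec, Matrix.dotProduct_mulVec,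
    Matrix.vecMul_transpose, Matrix.mulVec_mulVec, ← Matrix.mulVec_mulVec]

private lemma quad_transpose (M : Matrix aa aa ℝ) (x : aa → ℝ) :
    x ⬝ᵥ Mᵀ *ᵥ x = x ⬝ᵥ M *ᵥ x := by
  rw [Matrix.dotProduct_mulVec, Matrix.vecMul_transpose, dotProduct_comm]

private lemma posSemidef_smul' {M : Matrix aa aa ℝ} (hM : M.PosSemidef) {c : ℝ} (hc : 0 ≤ c) :
    (c • M).PosSemidef := by
  rw [Matrix.posSemidef_iff_dotProduct_mulVec]
  constructor
  · rw [Matrix.IsHermitian, Matrix.conjTranspose_smul, hM.1]; simp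
  · intro x
    rw [Matrix.smul_mulVec, dotProduct_smul]
    exact smul_nonneg hc (hM.dotProduct_mulVec_nonneg x)

private lemma posDef_smul' {M : Matrix aa aa ℝ} (hM : M.PosDef) {c : ℝ} (hc : 0 < c) :
    (c • M).PosDef := by
  rw [Matrix.posDef_iff_dotProduct_mulVec]
  constructor
  · rw [Matrix.IsHermitian, Matrix.conjTranspose_smul, hM.1]; simp
  · intro x hx
    rw [Matrix.smul_mulVec, dotProduct_smul]
    exact smul_pos hc (hM.dotProduct_mulVec_pos hx)

private lemma neg_two_dot_le' {s : ℝ} (hs : 0 < s) (u v : aa → ℝ) :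
    -2 * (u ⬝ᵥ v) ≤ s * (u ⬝ᵥ u) + s⁻¹ * (v ⬝ᵥ v) := by
  have h0 : 0 ≤ (s • u + v) ⬝ᵥ (s • u + v) := dot_self_nonneg'' _
  have hexp : (s • u + v) ⬝ᵥ (s • u + v)
      = s * s * (u ⬝ᵥ u) + 2 * s * (u ⬝ᵥ v) + v ⬝ᵥ v := by
    simp only [add_dotProduct, dotProduct_add, smul_dotProduct,
      dotProduct_smul, dotProduct_comm v u, smul_eq_mul]
    ring
  rw [hexp] at h0
  rw [← sub_nonneg]
  have key : s * (u ⬝ᵥ u) + s⁻¹ * (v ⬝ᵥ v) - -2 * (u ⬝ᵥ v)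
      = s⁻¹ * (s * s * (u ⬝ᵥ u) + 2 * s * (u ⬝ᵥ v) + v ⬝ᵥ v) := by
    field_simp; ring
  rw [key]
  positivity

private lemma mulVec_dot_self_le' (M : Matrix aa nn ℝ) (x : nn → ℝ) :
    (M *ᵥ x) ⬝ᵥ (M *ᵥ x) ≤ (∑ i, ∑ j, M i j ^ 2) * (x ⬝ᵥ x) := by
  have hx : x ⬝ᵥ x = ∑ j, x j ^ 2 := by simp [dotProduct, sq]
  rw [hx, Finset.sum_mul]
  refine Finset.sum_le_sum fun i _ => ?_
  have h := Finset.sum_mul_sq_le_sq_mul_sq Finset.univ (fun j => M i j) x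
  calc (M *ᵥ x) i * (M *ᵥ x) i = (∑ j, M i j * x j) ^ 2 := by rw [sq]; rfl
    _ ≤ (∑ j, M i j ^ 2) * ∑ j, x j ^ 2 := h

private lemma posdef_bound' {M : Matrix aa aa ℝ} (hM : M.PosDef) :
    ∃ ε > 0, ∀ x : aa → ℝ, ε * (x ⬝ᵥ x) ≤ x ⬝ᵥ M *ᵥ x := by
  have hquad : ∀ x : aa → ℝ, x ≠ 0 → 0 < x ⬝ᵥ M *ᵥ x := by
    intro x hx
    have := hM.dotProduct_mulVec_pos hx
    simpa using this
  have hf : Continuous fun x : aa → ℝ => x ⬝ᵥ M *ᵥ x := by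
    have : (fun x : aa → ℝ => x ⬝ᵥ M *ᵥ x)
        = fun x => ∑ i, x i * ∑ j, M i j * x j := rfl
    rw [this]
    exact continuous_finset_sum _ fun i _ => (continuous_apply i).mul
      (continuous_finset_sum _ fun j _ => continuous_const.mul (continuous_apply j))
  have hg : Continuous fun x : aa → ℝ => x ⬝ᵥ x := by
    have : (fun x : aa → ℝ => x ⬝ᵥ x) = fun x => ∑ i, x i * x i := rfl
    rw [this]
    exact continuous_finset_sum _ fun i _ => (continuous_apply i).mul (continuous_apply i)
  by_cases hne : ∃ x : aa → ℝ, x ≠ 0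
  · obtain ⟨x₁, hx₁⟩ := hne
    set S : Set (aa → ℝ) := {x | x ⬝ᵥ x = 1} with hS
    have hnorm : ∀ x : aa → ℝ, x ≠ 0 → ((Real.sqrt (x ⬝ᵥ x))⁻¹ • x) ∈ S := by
      intro x hx
      have hp := dot_self_pos'' hx
      have hr : 0 < Real.sqrt (x ⬝ᵥ x) := Real.sqrt_pos.mpr hp
      have heq : ((Real.sqrt (x ⬝ᵥ x))⁻¹ • x) ⬝ᵥ ((Real.sqrt (x ⬝ᵥ x))⁻¹ • x)
          = (Real.sqrt (x ⬝ᵥ x))⁻¹ * ((Real.sqrt (x ⬝ᵥ x))⁻¹ * (x ⬝ᵥ x)) := by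
        rw [smul_dotProduct, dotProduct_smul]
        simp [smul_eq_mul, mul_assoc]
      have hsq : Real.sqrt (x ⬝ᵥ x) * Real.sqrt (x ⬝ᵥ x) = x ⬝ᵥ x :=
        Real.mul_self_sqrt hp.le
      simp only [hS, Set.mem_setOf_eq, heq]
      field_simp
      rw [sq, hsq]
    have hSc : IsClosed S := isClosed_eq hg continuous_const
    have hSb : Bornology.IsBounded S := by
      refine (Metric.isBounded_iff_subset_closedBall 0).mpr ⟨1, fun x hx => ?_⟩
      simp only [Metric.mem_closedBall, dist_zero_right]
      refine (pi_norm_le_iff_of_nonneg zero_le_one).mpr fun i => ?_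
      have h1 : x i * x i ≤ x ⬝ᵥ x :=
        Finset.single_le_sum (f := fun j => x j * x j)
          (fun j _ => mul_self_nonneg (x j)) (Finset.mem_univ i)
      have hx1 : x ⬝ᵥ x = 1 := hx
      have h2 : x i * x i ≤ 1 := by rw [hx1] at h1; exact h1
      rw [Real.norm_eq_abs]
      nlinarith [abs_nonneg (x i), sq_abs (x i)]
    have hcmp : IsCompact S := Metric.isCompact_of_isClosed_isBounded hSc hSb
    obtain ⟨x₀, hx₀S, hmin⟩ :=
      hcmp.exists_isMinOn ⟨_, hnorm x₁ hx₁⟩ hf.continuousOn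
    have hx₀ : x₀ ≠ 0 := by
      intro h
      rw [hS] at hx₀S
      simp only [Set.mem_setOf_eq, h] at hx₀S
      simp at hx₀S
    refine ⟨x₀ ⬝ᵥ M *ᵥ x₀, hquad x₀ hx₀, fun x => ?_⟩
    by_cases hx : x = 0
    · simp [hx, Matrix.mulVec_zero]
    · have hp := dot_self_pos'' hx
      set r := Real.sqrt (x ⬝ᵥ x) with hrdef
      have hr : 0 < r := Real.sqrt_pos.mpr hp
      have hsq : r * r = x ⬝ᵥ x := Real.mul_self_sqrt hp.le
      have hu := hmin (hnorm x hx)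
      have hval : (r⁻¹ • x) ⬝ᵥ M *ᵥ (r⁻¹ • x) = r⁻¹ * (r⁻¹ * (x ⬝ᵥ M *ᵥ x)) := by
        rw [Matrix.mulVec_smul, smul_dotProduct, dotProduct_smul]
        simp [smul_eq_mul]
      simp only [Set.mem_setOf_eq] at hu
      rw [hval] at hu
      have h2 : (x₀ ⬝ᵥ M *ᵥ x₀) * (r * r) ≤ x ⬝ᵥ M *ᵥ x := by
        have hrne : r ≠ 0 := ne_of_gt hr
        calc (x₀ ⬝ᵥ M *ᵥ x₀) * (r * r)
            ≤ (r⁻¹ * (r⁻¹ * (x ⬝ᵥ M *ᵥ x))) * (r * r) := by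
              apply mul_le_mul_of_nonneg_right hu (by positivity)
          _ = x ⬝ᵥ M *ᵥ x := by field_simp
      rw [← hsq]
      linarith
  · push_neg at hne
    refine ⟨1, one_pos, fun x => ?_⟩
    simp [hne x, Matrix.mulVec_zero]

private lemma finsler_fwd {C : Matrix nn nn ℝ} (hC : Cᵀ = C) (U V : Matrix aa nn ℝ)
    {ε : ℝ} (hε : 0 < ε)
    (h : ∀ x : nn → ℝ, x ⬝ᵥ C *ᵥ x + 2 * ((U *ᵥ x) ⬝ᵥ (V *ᵥ x)) ≤ -(ε * (x ⬝ᵥ x))) :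
    ∃ μ : ℝ, (μ • (Uᵀ * U) - C).PosDef := by
  set c : ℝ := ∑ i, ∑ j, V i j ^ 2 with hc
  have hc0 : 0 ≤ c := Finset.sum_nonneg fun i _ => Finset.sum_nonneg fun j _ => sq_nonneg _
  set μ : ℝ := max (2 * (c + 1) / ε) 1 with hμ
  have hμ1 : (1 : ℝ) ≤ μ := le_max_right _ _
  have hμ0 : 0 < μ := lt_of_lt_of_le one_pos hμ1
  have hμ2 : 2 * (c + 1) / ε ≤ μ := le_max_left _ _
  refine ⟨μ, Matrix.posDef_iff_dotProduct_mulVec.mpr ⟨?_, ?_⟩⟩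
  · show (μ • (Uᵀ * U) - C)ᴴ = _
    rw [Matrix.conjTranspose_eq_transpose_of_trivial, Matrix.transpose_sub,
      Matrix.transpose_smul, Matrix.transpose_mul, Matrix.transpose_transpose, hC]
  · intro x hx
    have hxx : 0 < x ⬝ᵥ x := dot_self_pos'' hx
    have hval : (star x) ⬝ᵥ (μ • (Uᵀ * U) - C) *ᵥ x
        = μ * ((U *ᵥ x) ⬝ᵥ (U *ᵥ x)) - x ⬝ᵥ C *ᵥ x := by
      rw [star_trivial, Matrix.sub_mulVec, dotProduct_sub,
        Matrix.smul_mulVec, dotProduct_smul, quad_gram]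
      simp [smul_eq_mul]
    rw [hval]
    set u := U *ᵥ x
    set v := V *ᵥ x
    have h1 := h x
    have h2 := neg_two_dot_le' hμ0 u v
    have h3 : v ⬝ᵥ v ≤ c * (x ⬝ᵥ x) := mulVec_dot_self_le' V x
    have h6 : μ⁻¹ * c ≤ ε / 2 := by
      have hcμ : 2 * (c + 1) ≤ μ * ε := by
        rw [div_le_iff₀ hε] at hμ2; linarith
      rw [inv_mul_le_iff₀ hμ0]
      nlinarith
    have h7 : μ⁻¹ * (v ⬝ᵥ v) ≤ (ε / 2) * (x ⬝ᵥ x) := by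
      calc μ⁻¹ * (v ⬝ᵥ v) ≤ μ⁻¹ * (c * (x ⬝ᵥ x)) := by
            apply mul_le_mul_of_nonneg_left h3 (inv_nonneg.mpr hμ0.le)
        _ = (μ⁻¹ * c) * (x ⬝ᵥ x) := by ring
        _ ≤ (ε / 2) * (x ⬝ᵥ x) := mul_le_mul_of_nonneg_right h6 hxx.le
    nlinarith [h1, h2, h7, mul_pos hε hxx]

lemma lemma5_bwd (n m k : ℕ)
    (A : Matrix (Fin n) (Fin m) ℝ) (B : Matrix (Fin k) (Fin n) ℝ)
    (C : Matrix (Fin n) (Fin n) ℝ) (hC : Cᵀ = C) (μ₁ μ₂ : ℝ)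
    (h1 : (μ₁ • (A * Aᵀ) - C).PosDef) (h2 : (μ₂ • (Bᵀ * B) - C).PosDef) :
    ∃ X : Matrix (Fin m) (Fin k) ℝ,
      (-(A * X * B + (A * X * B)ᵀ + C)).PosDef := by
  set P : Matrix (Fin n) (Fin n) ℝ := A * Aᵀ with hP
  set Q : Matrix (Fin n) (Fin n) ℝ := Bᵀ * B with hQ
  have hPsd : P.PosSemidef := by
    have := Matrix.posSemidef_self_mul_conjTranspose A
    rwa [Matrix.conjTranspose_eq_transpose_of_trivial] at this
  have hQsd : Q.PosSemidef := by
    have := Matrix.posSemidef_conjTranspose_mul_self B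
    rwa [Matrix.conjTranspose_eq_transpose_of_trivial] at this
  set τ : ℝ := max μ₁ 0 with hτ
  have hτ0 : 0 ≤ τ := le_max_right _ _
  set T : Matrix (Fin n) (Fin n) ℝ := τ • P - C with hT
  have hTpd : T.PosDef := by
    have heq : T = (μ₁ • P - C) + (τ - μ₁) • P := by rw [hT, sub_smul]; abel
    rw [heq]
    exact h1.add_posSemidef (posSemidef_smul' hPsd (sub_nonneg.mpr (le_max_left _ _)))
  set μ : ℝ := max μ₂ 1 with hμ
  have hμpos : 0 < μ := lt_of_lt_of_le one_pos (le_max_right _ _)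
  set D : Matrix (Fin n) (Fin n) ℝ := μ • Q - C with hD
  have hDpd : D.PosDef := by
    have heq : D = (μ₂ • Q - C) + (μ - μ₂) • Q := by rw [hD, sub_smul]; abel
    rw [heq]
    exact h2.add_posSemidef (posSemidef_smul' hQsd (sub_nonneg.mpr (le_max_left _ _)))
  set Φ : Matrix (Fin n) (Fin n) ℝ := T⁻¹ with hΦ
  have hTdet : IsUnit T.det := hTpd.det_pos.ne'.isUnit
  have hΦl : Φ * T = 1 := Matrix.nonsing_inv_mul T hTdet
  have hΦr : T * Φ = 1 := Matrix.mul_nonsing_inv T hTdet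
  have hΦpd : Φ.PosDef := hTpd.inv
  have hΦsymm : Φᵀ = Φ := by
    have := hΦpd.isHermitian
    rwa [Matrix.IsHermitian, Matrix.conjTranspose_eq_transpose_of_trivial] at this
  set δ : ℝ := (2 * μ)⁻¹ with hδ
  have hδpos : 0 < δ := by rw [hδ]; positivity
  set R : Matrix (Fin k) (Fin k) ℝ := B * Φ * Bᵀ with hR
  have hRsd : R.PosSemidef := by
    have := hΦpd.posSemidef.mul_mul_conjTranspose_same B
    rwa [Matrix.conjTranspose_eq_transpose_of_trivial] at this
  set Gm : Matrix (Fin k) (Fin k) ℝ := R + δ • 1 with hGm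
  have hGmpd : Gm.PosDef :=
    Matrix.PosDef.posSemidef_add hRsd (posDef_smul' Matrix.PosDef.one hδpos)
  set G : Matrix (Fin k) (Fin k) ℝ := Gm⁻¹ with hG
  have hGmdet : IsUnit Gm.det := hGmpd.det_pos.ne'.isUnit
  have hGl : G * Gm = 1 := Matrix.nonsing_inv_mul Gm hGmdet
  have hGr : Gm * G = 1 := Matrix.mul_nonsing_inv Gm hGmdet
  have hGpd : G.PosDef := hGmpd.inv
  have hGsymm : Gᵀ = G := by
    have := hGpd.isHermitian
    rwa [Matrix.IsHermitian, Matrix.conjTranspose_eq_transpose_of_trivial] at this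
  refine ⟨-(τ • (Aᵀ * Φ * Bᵀ * G)), ?_⟩
  set X : Matrix (Fin m) (Fin k) ℝ := -(τ • (Aᵀ * Φ * Bᵀ * G)) with hX
  set K : Matrix (Fin n) (Fin n) ℝ := Bᵀ * G * B with hK
  set J : Matrix (Fin n) (Fin n) ℝ := Φ * K with hJ
  set W : Matrix (Fin n) (Fin n) ℝ := Bᵀ * (G * G) * B with hW
  have hKsymm : Kᵀ = K := by
    rw [hK, Matrix.transpose_mul, Matrix.transpose_mul, Matrix.transpose_transpose,
      hGsymm, Matrix.mul_assoc]
  have hJt : Jᵀ = K * Φ := by rw [hJ, Matrix.transpose_mul, hΦsymm, hKsymm]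
  have hTP : τ • P = T + C := by rw [hT]; abel
  -- identity 1 : A * X * B = -(K + C * J)
  have e2 : (τ • P) * (Φ * K) = K + C * J := by
    rw [hTP, Matrix.add_mul, ← Matrix.mul_assoc T Φ K, hΦr, Matrix.one_mul, ← hJ]
  have e1 : A * X * B = -((τ • P) * (Φ * K)) := by
    rw [hX, hP, hK]
    simp only [Matrix.mul_neg, Matrix.neg_mul, Matrix.mul_smul, Matrix.smul_mul,
      Matrix.mul_assoc]
  have hAXB : A * X * B = -(K + C * J) := by rw [e1, e2]
  have hAXBT : (A * X * B)ᵀ = -(K + Jᵀ * C) := by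
    rw [hAXB, Matrix.transpose_neg, Matrix.transpose_add, hKsymm, Matrix.transpose_mul, hC]
  -- B * (1 - J) = δ • (G * B)
  have hBPB : B * Φ * Bᵀ = Gm - δ • 1 := by rw [hGm, hR]; abel
  have hBJ : B * (1 - J) = δ • (G * B) := by
    have hBJ1 : B * J = B - δ • (G * B) := by
      rw [hJ, hK, ← Matrix.mul_assoc B Φ _]
      calc B * Φ * (Bᵀ * G * B)
          = (B * Φ * Bᵀ) * (G * B) := by simp only [Matrix.mul_assoc]
        _ = (Gm - δ • 1) * (G * B) := by rw [hBPB]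
        _ = Gm * (G * B) - δ • (G * B) := by
            rw [Matrix.sub_mul, Matrix.smul_mul, Matrix.one_mul]
        _ = B - δ • (G * B) := by rw [← Matrix.mul_assoc, hGr, Matrix.one_mul]
    rw [Matrix.mul_sub, Matrix.mul_one, hBJ1]
    abel
  -- identity (S)
  have hKΦK : K * (Φ * K) = K - δ • W := by
    calc K * (Φ * K) = (Bᵀ * G) * ((B * Φ * Bᵀ) * (G * B)) := by
          rw [hK]; simp only [Matrix.mul_assoc]
      _ = (Bᵀ * G) * ((Gm - δ • 1) * (G * B)) := by rw [hBPB]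
      _ = (Bᵀ * G) * (Gm * (G * B) - δ • (G * B)) := by
          rw [Matrix.sub_mul, Matrix.smul_mul, Matrix.one_mul]
      _ = (Bᵀ * G) * (B - δ • (G * B)) := by rw [← Matrix.mul_assoc, hGr, Matrix.one_mul]
      _ = K - δ • W := by
          rw [Matrix.mul_sub, Matrix.mul_smul, hK, hW]
          simp only [Matrix.mul_assoc]
  have hS2 : Jᵀ * T * J = K - δ • W := by
    rw [hJt, hJ]
    simp only [Matrix.mul_assoc]
    rw [← Matrix.mul_assoc T Φ K, hΦr, Matrix.one_mul]
    have : K * (Φ * K) = K - δ • W := hKΦK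
    simpa [Matrix.mul_assoc] using this
  have hS2' : Jᵀ * (τ • P) * J - Jᵀ * C * J = K - δ • W := by
    rw [← Matrix.sub_mul, ← Matrix.mul_sub, ← hT, hS2]
  have hS : Jᵀ * C * J = Jᵀ * (τ • P) * J - K + δ • W := by
    calc Jᵀ * C * J
        = Jᵀ * (τ • P) * J - (Jᵀ * (τ • P) * J - Jᵀ * C * J) := by abel
      _ = Jᵀ * (τ • P) * J - (K - δ • W) := by rw [hS2']
      _ = Jᵀ * (τ • P) * J - K + δ • W := by abel
  -- master identity
  have hmaster : K + C * J + (K + Jᵀ * C) - C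
      = -((1 - J)ᵀ * C * (1 - J)) + Jᵀ * (τ • P) * J + K + δ • W := by
    have hexp : (1 - J)ᵀ * C * (1 - J)
        = C - C * J - Jᵀ * C + Jᵀ * C * J := by
      simp only [Matrix.transpose_sub, Matrix.transpose_one, Matrix.sub_mul,
        Matrix.mul_sub, Matrix.one_mul, Matrix.mul_one]
      abel
    rw [hexp, hS]
    abel
  have hFinal : -(A * X * B + (A * X * B)ᵀ + C)
      = -((1 - J)ᵀ * C * (1 - J)) + Jᵀ * (τ • P) * J + K + δ • W := by
    rw [hAXBT, hAXB, ← hmaster]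
    abel
  rw [hFinal]
  rw [Matrix.posDef_iff_dotProduct_mulVec]
  constructor
  · show _ᴴ = _
    rw [Matrix.conjTranspose_eq_transpose_of_trivial]
    have hWsymm : Wᵀ = W := by
      rw [hW]
      simp only [Matrix.transpose_mul, Matrix.transpose_transpose, hGsymm,
        Matrix.mul_assoc]
    have hPt : Pᵀ = P := by
      rw [hP, Matrix.transpose_mul, Matrix.transpose_transpose]
    have h1J : ((1 - J)ᵀ * C * (1 - J))ᵀ = (1 - J)ᵀ * C * (1 - J) := by
      simp only [Matrix.transpose_mul, Matrix.transpose_transpose, hC, Matrix.mul_assoc]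
    have hJPJ : (Jᵀ * (τ • P) * J)ᵀ = Jᵀ * (τ • P) * J := by
      simp only [Matrix.transpose_mul, Matrix.transpose_transpose, Matrix.transpose_smul,
        hPt, Matrix.mul_assoc]
    rw [Matrix.transpose_add, Matrix.transpose_add, Matrix.transpose_add,
      Matrix.transpose_neg, Matrix.transpose_smul, h1J, hJPJ, hKsymm, hWsymm]
  · intro x hx
    rw [star_trivial]
    have t1 : x ⬝ᵥ ((1 - J)ᵀ * C * (1 - J)) *ᵥ x
        = ((1 - J) *ᵥ x) ⬝ᵥ (C *ᵥ ((1 - J) *ᵥ x)) := quad_congr _ _ _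
    have t2 : x ⬝ᵥ (Jᵀ * (τ • P) * J) *ᵥ x
        = τ * ((J *ᵥ x) ⬝ᵥ (P *ᵥ (J *ᵥ x))) := by
      rw [quad_congr, Matrix.smul_mulVec, dotProduct_smul, smul_eq_mul]
    have t3 : x ⬝ᵥ K *ᵥ x = (B *ᵥ x) ⬝ᵥ (G *ᵥ (B *ᵥ x)) := by
      rw [hK]; exact quad_congr _ _ _
    have t4 : x ⬝ᵥ W *ᵥ x = (B *ᵥ x) ⬝ᵥ ((G * G) *ᵥ (B *ᵥ x)) := by
      rw [hW]; exact quad_congr _ _ _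
    have hq : x ⬝ᵥ (-((1 - J)ᵀ * C * (1 - J)) + Jᵀ * (τ • P) * J + K + δ • W) *ᵥ x
        = -(((1 - J) *ᵥ x) ⬝ᵥ (C *ᵥ ((1 - J) *ᵥ x)))
          + τ * ((J *ᵥ x) ⬝ᵥ (P *ᵥ (J *ᵥ x)))
          + (B *ᵥ x) ⬝ᵥ (G *ᵥ (B *ᵥ x))
          + δ * ((B *ᵥ x) ⬝ᵥ ((G * G) *ᵥ (B *ᵥ x))) := by
      rw [Matrix.add_mulVec, Matrix.add_mulVec, Matrix.add_mulVec,
        dotProduct_add, dotProduct_add, dotProduct_add,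
        Matrix.neg_mulVec, dotProduct_neg, Matrix.smul_mulVec,
        dotProduct_smul, smul_eq_mul, t1, t2, t3, t4]
    rw [hq]
    -- vector identities
    have hBz : B *ᵥ ((1 - J) *ᵥ x) = δ • (G *ᵥ (B *ᵥ x)) := by
      rw [Matrix.mulVec_mulVec, hBJ, Matrix.smul_mulVec, ← Matrix.mulVec_mulVec]
    have hGmw : Gm *ᵥ (G *ᵥ (B *ᵥ x)) = B *ᵥ x := by
      rw [Matrix.mulVec_mulVec, hGr, Matrix.one_mulVec]
    have hzDgen : ∀ zz : Fin n → ℝ, zz ⬝ᵥ (D *ᵥ zz)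
        = μ * ((B *ᵥ zz) ⬝ᵥ (B *ᵥ zz)) - zz ⬝ᵥ (C *ᵥ zz) := by
      intro zz
      rw [hD, Matrix.sub_mulVec, dotProduct_sub, Matrix.smul_mulVec,
        dotProduct_smul, smul_eq_mul, hQ, quad_gram B zz]
    have hzD : ((1 - J) *ᵥ x) ⬝ᵥ (D *ᵥ ((1 - J) *ᵥ x))
        = μ * (δ * (δ * ((G *ᵥ (B *ᵥ x)) ⬝ᵥ (G *ᵥ (B *ᵥ x)))))
          - ((1 - J) *ᵥ x) ⬝ᵥ (C *ᵥ ((1 - J) *ᵥ x)) := by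
      rw [hzDgen ((1 - J) *ᵥ x), hBz, smul_dotProduct, dotProduct_smul,
        smul_eq_mul, smul_eq_mul]
    have hKval : (B *ᵥ x) ⬝ᵥ (G *ᵥ (B *ᵥ x))
        = (G *ᵥ (B *ᵥ x)) ⬝ᵥ (R *ᵥ (G *ᵥ (B *ᵥ x)))
          + δ * ((G *ᵥ (B *ᵥ x)) ⬝ᵥ (G *ᵥ (B *ᵥ x))) := by
      calc (B *ᵥ x) ⬝ᵥ (G *ᵥ (B *ᵥ x))
          = (Gm *ᵥ (G *ᵥ (B *ᵥ x))) ⬝ᵥ (G *ᵥ (B *ᵥ x)) := by rw [hGmw]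
        _ = (G *ᵥ (B *ᵥ x)) ⬝ᵥ (Gm *ᵥ (G *ᵥ (B *ᵥ x))) := dotProduct_comm _ _
        _ = (G *ᵥ (B *ᵥ x)) ⬝ᵥ (R *ᵥ (G *ᵥ (B *ᵥ x)))
            + δ * ((G *ᵥ (B *ᵥ x)) ⬝ᵥ (G *ᵥ (B *ᵥ x))) := by
          rw [hGm, Matrix.add_mulVec, dotProduct_add, Matrix.smul_mulVec,
            Matrix.one_mulVec, dotProduct_smul, smul_eq_mul]
    have ht4 : (B *ᵥ x) ⬝ᵥ ((G * G) *ᵥ (B *ᵥ x))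
        = (G *ᵥ (B *ᵥ x)) ⬝ᵥ (G *ᵥ (B *ᵥ x)) := by
      rw [← Matrix.mulVec_mulVec, Matrix.dotProduct_mulVec (B *ᵥ x) G,
        ← Matrix.mulVec_transpose, hGsymm]
    -- nonnegativity facts
    have hyP : 0 ≤ (J *ᵥ x) ⬝ᵥ (P *ᵥ (J *ᵥ x)) := by
      have := hPsd.dotProduct_mulVec_nonneg (J *ᵥ x); simpa using this
    have hwR : 0 ≤ (G *ᵥ (B *ᵥ x)) ⬝ᵥ (R *ᵥ (G *ᵥ (B *ᵥ x))) := by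
      have := hRsd.dotProduct_mulVec_nonneg (G *ᵥ (B *ᵥ x)); simpa using this
    have hww : 0 ≤ (G *ᵥ (B *ᵥ x)) ⬝ᵥ (G *ᵥ (B *ᵥ x)) :=
      Finset.sum_nonneg fun i _ => mul_self_nonneg _
    have hzDnn : 0 ≤ ((1 - J) *ᵥ x) ⬝ᵥ (D *ᵥ ((1 - J) *ᵥ x)) := by
      have := hDpd.posSemidef.dotProduct_mulVec_nonneg ((1 - J) *ᵥ x); simpa using this
    have hmd : μ * δ = 1 / 2 := by
      rw [hδ]
      field_simp
    have hscale : μ * (δ * (δ * ((G *ᵥ (B *ᵥ x)) ⬝ᵥ (G *ᵥ (B *ᵥ x)))))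
        = δ / 2 * ((G *ᵥ (B *ᵥ x)) ⬝ᵥ (G *ᵥ (B *ᵥ x))) := by
      calc μ * (δ * (δ * ((G *ᵥ (B *ᵥ x)) ⬝ᵥ (G *ᵥ (B *ᵥ x)))))
          = (μ * δ) * (δ * ((G *ᵥ (B *ᵥ x)) ⬝ᵥ (G *ᵥ (B *ᵥ x)))) := by ring
        _ = δ / 2 * ((G *ᵥ (B *ᵥ x)) ⬝ᵥ (G *ᵥ (B *ᵥ x))) := by rw [hmd]; ring
    have hτyP : 0 ≤ τ * ((J *ᵥ x) ⬝ᵥ (P *ᵥ (J *ᵥ x))) := mul_nonneg hτ0 hyP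
    have hδww : 0 ≤ δ * ((G *ᵥ (B *ᵥ x)) ⬝ᵥ (G *ᵥ (B *ᵥ x))) := mul_nonneg hδpos.le hww
    have hhalf : δ / 2 * ((G *ᵥ (B *ᵥ x)) ⬝ᵥ (G *ᵥ (B *ᵥ x)))
        ≤ δ * ((G *ᵥ (B *ᵥ x)) ⬝ᵥ (G *ᵥ (B *ᵥ x))) := by nlinarith
    by_cases hzcase : (1 - J) *ᵥ x = 0
    · -- then w ≠ 0
      have hwne : G *ᵥ (B *ᵥ x) ≠ 0 := by
        intro hw0
        have hBx0 : B *ᵥ x = 0 := by rw [← hGmw, hw0, Matrix.mulVec_zero]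
        have hJx0 : J *ᵥ x = 0 := by
          rw [hJ, ← Matrix.mulVec_mulVec, hK, ← Matrix.mulVec_mulVec, hBx0]
          simp [Matrix.mulVec_zero]
        have hxz : (1 - J) *ᵥ x = x := by
          rw [Matrix.sub_mulVec, Matrix.one_mulVec, hJx0]; simp
        rw [hzcase] at hxz
        exact hx hxz.symm
      have hwpos : 0 < (G *ᵥ (B *ᵥ x)) ⬝ᵥ (G *ᵥ (B *ᵥ x)) := dot_self_pos'' hwne
      have hδwpos : 0 < δ * ((G *ᵥ (B *ᵥ x)) ⬝ᵥ (G *ᵥ (B *ᵥ x))) := mul_pos hδpos hwpos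
      rw [hKval, ht4]
      linarith [hzD, hscale, hzDnn]
    · have hzpos : 0 < ((1 - J) *ᵥ x) ⬝ᵥ (D *ᵥ ((1 - J) *ᵥ x)) := by
        have := hDpd.dotProduct_mulVec_pos hzcase; simpa using this
      rw [hKval, ht4]
      linarith [hzD, hscale]

end Helpers


/-- Lemma 5: the matrix inequality AXB + (AXB)ᵀ + C ≺ 0 is solvable in X if and only if
there exist μ₁, μ₂ with C ≺ μ₁AAᵀ and C ≺ μ₂BᵀB. -/
theorem lemma5 (n m k : ℕ)
    (A : Matrix (Fin n) (Fin m) ℝ) (B : Matrix (Fin k) (Fin n) ℝ)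
    (C : Matrix (Fin n) (Fin n) ℝ) (hC : Cᵀ = C) :
    (∃ X : Matrix (Fin m) (Fin k) ℝ,
        (-(A * X * B + (A * X * B)ᵀ + C)).PosDef) ↔
      ∃ μ₁ μ₂ : ℝ, (μ₁ • (A * Aᵀ) - C).PosDef ∧ (μ₂ • (Bᵀ * B) - C).PosDef := by
  constructor
  · rintro ⟨X, hX⟩
    obtain ⟨ε, hε, hbound⟩ := posdef_bound' hX
    have hΨ : ∀ x : Fin n → ℝ,
        x ⬝ᵥ (A * X * B + (A * X * B)ᵀ + C) *ᵥ x ≤ -(ε * (x ⬝ᵥ x)) := by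
      intro x
      have h := hbound x
      rw [Matrix.neg_mulVec, dotProduct_neg] at h
      linarith
    have hcase1 : ∀ x : Fin n → ℝ,
        x ⬝ᵥ C *ᵥ x + 2 * ((Aᵀ *ᵥ x) ⬝ᵥ ((X * B) *ᵥ x)) ≤ -(ε * (x ⬝ᵥ x)) := by
      intro x
      have h := hΨ x
      have e1 : x ⬝ᵥ (A * X * B) *ᵥ x = (Aᵀ *ᵥ x) ⬝ᵥ ((X * B) *ᵥ x) := by
        have he : A * X * B = (Aᵀ)ᵀ * (X * B) := by
          rw [Matrix.transpose_transpose, Matrix.mul_assoc]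
        rw [he, quad_pair]
      have e2 : x ⬝ᵥ (A * X * B)ᵀ *ᵥ x = x ⬝ᵥ (A * X * B) *ᵥ x := quad_transpose _ _
      rw [Matrix.add_mulVec, Matrix.add_mulVec, dotProduct_add,
        dotProduct_add, e2, e1] at h
      linarith
    obtain ⟨m1, hm1⟩ := finsler_fwd hC Aᵀ (X * B) hε hcase1
    rw [Matrix.transpose_transpose] at hm1
    have hcase2 : ∀ x : Fin n → ℝ,
        x ⬝ᵥ C *ᵥ x + 2 * ((B *ᵥ x) ⬝ᵥ ((A * X)ᵀ *ᵥ x)) ≤ -(ε * (x ⬝ᵥ x)) := by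
      intro x
      have h := hΨ x
      have e1 : x ⬝ᵥ (A * X * B)ᵀ *ᵥ x = (B *ᵥ x) ⬝ᵥ ((A * X)ᵀ *ᵥ x) := by
        have he : (A * X * B)ᵀ = Bᵀ * (A * X)ᵀ := Matrix.transpose_mul _ _
        rw [he, quad_pair]
      have e2 : x ⬝ᵥ (A * X * B) *ᵥ x = x ⬝ᵥ (A * X * B)ᵀ *ᵥ x :=
        (quad_transpose _ _).symm
      rw [Matrix.add_mulVec, Matrix.add_mulVec, dotProduct_add,
        dotProduct_add, e2, e1] at h
      linarith
    obtain ⟨m2, hm2⟩ := finsler_fwd hC B ((A * X)ᵀ) hε hcase2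
    exact ⟨m1, m2, hm1, hm2⟩
  · rintro ⟨μ₁, μ₂, h1, h2⟩
    exact lemma5_bwd n m k A B C hC μ₁ μ₂ h1 h2
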